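/- Let X be a real Hilbert space, m ∈ ℕ, D ⊆ X a linear subspace, and let 𝔄 : D → X and 𝔅, ℭ : D → ℝ^m be linear maps satisfying the impedance passivity inequality ⟨𝔄x, x⟩_X ≤ ⟨𝔅x, ℭx⟩_{ℝ^m} for all x ∈ D. Let φ : ℝ^m → Set (ℝ^m) be a monotone set-valued map. Then the restriction A of 𝔄 to D(A) := { x ∈ D : 𝔅x ∈ −φ(ℭx) } is dissipative: for all x, x' ∈ D(A) one has ⟨𝔄x − 𝔄x', x − x'⟩_X ≤ 0. -/
import Mathlib


open scoped RealInnerProductSpace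

/-- dissipativity part of the proof of Theorem 4.2.
An impedance passive triple `(𝔄, 𝔅, ℭ)` with a monotone feedback `φ` yields a dissipative
operator `A = 𝔄|_{𝔅x ∈ -φ(ℭx)}`. -/
theorem stmt_12 {X : Type*} [NormedAddCommGroup X] [InnerProductSpace ℝ X]
    (m : ℕ) (D : Submodule ℝ X)
    (Aop : D →ₗ[ℝ] X) (Bop Cop : D →ₗ[ℝ] EuclideanSpace ℝ (Fin m))
    (hpass : ∀ x : D, ⟪Aop x, (x : X)⟫ ≤ ⟪Bop x, Cop x⟫)
    (φ : EuclideanSpace ℝ (Fin m) → Set (EuclideanSpace ℝ (Fin m)))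
    (hmono : ∀ v v' w w', w ∈ φ v → w' ∈ φ v' → 0 ≤ ⟪w - w', v - v'⟫) :
    ∀ x x' : D, -Bop x ∈ φ (Cop x) → -Bop x' ∈ φ (Cop x') →
      ⟪Aop x - Aop x', (x : X) - (x' : X)⟫ ≤ 0 := by
  intro x x' hx hx'
  have h1 := hpass (x - x')
  have h2 := hmono (Cop x) (Cop x') (-Bop x) (-Bop x') hx hx'
  simp only [map_sub, Submodule.coe_sub] at h1
  have h3 : ⟪Bop x - Bop x', Cop x - Cop x'⟫ ≤ 0 := by
    have : (-Bop x) - (-Bop x') = -(Bop x - Bop x') := by abel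
    rw [this, inner_neg_left] at h2
    linarith
  linarith
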